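/- Let 0 < H < 1 and let m ≥ 1 be an integer. Then the double integral ∫₀¹∫₀¹ R_H(u,v)^{2m} (uv)^{−H(2m+1)} du dv is finite, and n^{−2} Σ_{1≤i,j≤n−1} R_H(i/n, j/n)^{2m} (i/n)^{−H(2m+1)} (j/n)^{−H(2m+1)} converges to this integral as n → ∞. -/

import Mathlib

open MeasureTheory Filter Topology Real

/-- Covariance function of fractional Brownian motion with Hurst parameter `H`. -/
noncomputable def RH (H t s : ℝ) : ℝ :=
  (t ^ (2 * H) + s ^ (2 * H) - |t - s| ^ (2 * H)) / 2

namespace S14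

lemma rpow_subadd {H : ℝ} (hH : 0 ≤ H) (hH1 : H ≤ 1) {x y : ℝ} (hx : 0 ≤ x) (hy : 0 ≤ y) :
    (x + y) ^ H ≤ x ^ H + y ^ H := by
  have h := NNReal.rpow_add_le_add_rpow (Real.toNNReal x) (Real.toNNReal y) hH hH1
  have := (NNReal.coe_le_coe).2 h
  simp only [NNReal.coe_rpow, NNReal.coe_add,
    Real.coe_toNNReal _ hx, Real.coe_toNNReal _ hy] at this
  exact this

lemma rpow_holder {H : ℝ} (hH : 0 ≤ H) (hH1 : H ≤ 1) {x y : ℝ} (hx : 0 ≤ x) (hy : 0 ≤ y) :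
    |x ^ H - y ^ H| ≤ |x - y| ^ H := by
  wlog hxy : y ≤ x generalizing x y
  · rw [abs_sub_comm, abs_sub_comm x y]; exact this hy hx (le_of_not_ge hxy)
  have h1 : y ^ H ≤ x ^ H := Real.rpow_le_rpow hy hxy hH
  rw [abs_of_nonneg (by linarith), abs_of_nonneg (by linarith)]
  have h2 : x ^ H ≤ (x - y) ^ H + y ^ H := by
    have := rpow_subadd hH hH1 (x := x - y) (y := y) (by linarith) hy
    simpa using this
  linarith

lemma abs_RH_le {H : ℝ} (hH : 0 < H) (hH1 : H ≤ 1) {x y : ℝ} (hx : 0 ≤ x) (hy : 0 ≤ y) :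
    |RH H x y| ≤ x ^ H * y ^ H := by
  set a := x ^ H with ha'
  set b := y ^ H with hb'
  set c := |x - y| ^ H with hc'
  have ha : 0 ≤ a := Real.rpow_nonneg hx H
  have hb : 0 ≤ b := Real.rpow_nonneg hy H
  have hc : 0 ≤ c := Real.rpow_nonneg (abs_nonneg _) H
  have h1 : |a - b| ≤ c := rpow_holder hH.le hH1 hx hy
  have h2 : c ≤ a + b := by
    have habs : |x - y| ≤ x + y := by
      rw [abs_sub_le_iff]; constructor <;> linarith
    calc c ≤ (x + y) ^ H := Real.rpow_le_rpow (abs_nonneg _) habs hH.le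
      _ ≤ a + b := rpow_subadd hH.le hH1 hx hy
  have hxa : x ^ (2 * H) = a ^ 2 := by
    rw [ha', ← Real.rpow_natCast (x ^ H) 2, ← Real.rpow_mul hx]
    norm_num [mul_comm]
  have hyb : y ^ (2 * H) = b ^ 2 := by
    rw [hb', ← Real.rpow_natCast (y ^ H) 2, ← Real.rpow_mul hy]
    norm_num [mul_comm]
  have hcc : |x - y| ^ (2 * H) = c ^ 2 := by
    rw [hc', ← Real.rpow_natCast (|x - y| ^ H) 2, ← Real.rpow_mul (abs_nonneg _)]
    norm_num [mul_comm]
  have hsq1 : (a - b) ^ 2 ≤ c ^ 2 := by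
    have := sq_abs (a - b) ▸ pow_le_pow_left₀ (abs_nonneg _) h1 2
    simpa [sq_abs] using this
  have hsq2 : c ^ 2 ≤ (a + b) ^ 2 := pow_le_pow_left₀ hc h2 2
  rw [RH, hxa, hyb, hcc, abs_le]
  constructor <;> nlinarith

noncomputable def fI (H : ℝ) (m : ℕ) (p : ℝ × ℝ) : ℝ :=
  RH H p.1 p.2 ^ (2 * m) * (p.1 * p.2) ^ (-(H * (2 * (m : ℝ) + 1)))

lemma rpow_neg_le {x y H : ℝ} (hx : 0 < x) (hxy : x ≤ y) (hH : 0 ≤ H) :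
    y ^ (-H) ≤ x ^ (-H) := by
  have hy : 0 < y := lt_of_lt_of_le hx hxy
  rw [Real.rpow_neg hx.le, Real.rpow_neg hy.le]
  exact inv_anti₀ (Real.rpow_pos_of_pos hx H) (Real.rpow_le_rpow hx.le hxy hH)

lemma f_abs_le {H : ℝ} (hH : 0 < H) (hH1 : H ≤ 1) (m : ℕ) {p : ℝ × ℝ}
    (hx : 0 < p.1) (hy : 0 < p.2) :
    |fI H m p| ≤ p.1 ^ (-H) * p.2 ^ (-H) := by
  obtain ⟨x, y⟩ := p
  simp only at hx hy
  have hRH : |RH H x y| ≤ x ^ H * y ^ H := abs_RH_le hH hH1 hx.le hy.le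
  have hpow : |RH H x y| ^ (2 * m) ≤ (x ^ H * y ^ H) ^ (2 * m) :=
    pow_le_pow_left₀ (abs_nonneg _) hRH _
  have hprod : 0 < x * y := mul_pos hx hy
  have hr : 0 < (x * y) ^ (-(H * (2 * (m : ℝ) + 1))) := Real.rpow_pos_of_pos hprod _
  have key : (x ^ H * y ^ H) ^ (2 * m) * (x * y) ^ (-(H * (2 * (m : ℝ) + 1)))
      = x ^ (-H) * y ^ (-H) := by
    rw [Real.mul_rpow hx.le hy.le, mul_pow,
      ← Real.rpow_natCast (x ^ H) (2 * m), ← Real.rpow_natCast (y ^ H) (2 * m),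
      ← Real.rpow_mul hx.le, ← Real.rpow_mul hy.le]
    rw [show x ^ (H * (2 * m : ℕ)) * y ^ (H * (2 * m : ℕ)) *
        (x ^ (-(H * (2 * (m : ℝ) + 1))) * y ^ (-(H * (2 * (m : ℝ) + 1))))
        = (x ^ (H * (2 * m : ℕ)) * x ^ (-(H * (2 * (m : ℝ) + 1)))) *
          (y ^ (H * (2 * m : ℕ)) * y ^ (-(H * (2 * (m : ℝ) + 1)))) from by ring,
      ← Real.rpow_add hx, ← Real.rpow_add hy]
    congr 2 <;> push_cast <;> ring
  calc |fI H m (x, y)| = |RH H x y| ^ (2 * m) * (x * y) ^ (-(H * (2 * (m : ℝ) + 1))) := by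
        rw [fI, abs_mul, abs_pow, abs_of_pos hr]
    _ ≤ (x ^ H * y ^ H) ^ (2 * m) * (x * y) ^ (-(H * (2 * (m : ℝ) + 1))) := by
        exact mul_le_mul_of_nonneg_right hpow hr.le
    _ = x ^ (-H) * y ^ (-H) := key

lemma f_contAt {H : ℝ} (hH : 0 < H) (m : ℕ) {p : ℝ × ℝ} (hp1 : 0 < p.1) (hp2 : 0 < p.2) :
    ContinuousAt (fI H m) p := by
  have h2H : (0:ℝ) ≤ 2 * H := by linarith
  have c1 : ContinuousAt (fun q : ℝ × ℝ => q.1 ^ (2 * H)) p :=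
    continuousAt_fst.rpow_const (Or.inr h2H)
  have c2 : ContinuousAt (fun q : ℝ × ℝ => q.2 ^ (2 * H)) p :=
    continuousAt_snd.rpow_const (Or.inr h2H)
  have c3 : ContinuousAt (fun q : ℝ × ℝ => |q.1 - q.2| ^ (2 * H)) p :=
    ((continuousAt_fst.sub continuousAt_snd).abs).rpow_const (Or.inr h2H)
  have cR : ContinuousAt (fun q : ℝ × ℝ => RH H q.1 q.2) p := by
    unfold RH
    exact ((c1.add c2).sub c3).div_const 2
  have cM : ContinuousAt (fun q : ℝ × ℝ => (q.1 * q.2) ^ (-(H * (2 * (m : ℝ) + 1)))) p :=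
    (continuousAt_fst.mul continuousAt_snd).rpow_const (Or.inl (mul_pos hp1 hp2).ne')
  exact (cR.pow _).mul cM

lemma fI_measurable (H : ℝ) (m : ℕ) : Measurable (fI H m) := by
  unfold fI RH
  apply Measurable.mul
  · apply Measurable.pow_const
    apply Measurable.div_const
    apply Measurable.sub
    · exact (measurable_fst.pow measurable_const).add (measurable_snd.pow measurable_const)
    · exact ((measurable_fst.sub measurable_snd).abs).pow measurable_const
  · exact (measurable_fst.mul measurable_snd).pow measurable_const

lemma bound_integrable {H : ℝ} (hH : 0 < H) (hH' : H < 1) :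
    Integrable (fun p : ℝ × ℝ => p.1 ^ (-H) * p.2 ^ (-H))
      (volume.restrict (Set.Ioc (0:ℝ) 1 ×ˢ Set.Ioc (0:ℝ) 1)) := by
  have h1 : IntegrableOn (fun x : ℝ => x ^ (-H)) (Set.Ioc 0 1) := by
    have := intervalIntegral.intervalIntegrable_rpow' (a := 0) (b := 1)
      (r := -H) (by linarith)
    rwa [intervalIntegrable_iff_integrableOn_Ioc_of_le (by norm_num)] at this
  have := h1.mul_prod h1
  rwa [Measure.prod_restrict, ← Measure.volume_eq_prod] at this

def cell (n i : ℕ) : Set ℝ := Set.Ioc (((i:ℝ) - 1) / n) ((i:ℝ) / n)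

lemma mem_cell_iff {n i : ℕ} (hn : 0 < n) (hi : 0 < i) {u : ℝ} :
    u ∈ cell n i ↔ ⌈(n:ℝ) * u⌉₊ = i := by
  have hn' : (0:ℝ) < n := Nat.cast_pos.2 hn
  rw [cell, Set.mem_Ioc, Nat.ceil_eq_iff hi.ne', div_lt_iff₀ hn', le_div_iff₀ hn']
  constructor
  · rintro ⟨h1, h2⟩
    refine ⟨?_, by linarith [h2]⟩
    have : ((i - 1 : ℕ) : ℝ) = (i:ℝ) - 1 := by
      push_cast [Nat.cast_sub hi]; ring
    rw [this]; nlinarith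
  · rintro ⟨h1, h2⟩
    have : ((i - 1 : ℕ) : ℝ) = (i:ℝ) - 1 := by
      push_cast [Nat.cast_sub hi]; ring
    rw [this] at h1
    exact ⟨by nlinarith, by nlinarith⟩

noncomputable def stepF (f : ℝ × ℝ → ℝ) (n : ℕ) : ℝ × ℝ → ℝ :=
  fun p => ∑ i ∈ Finset.Ico 1 n, ∑ j ∈ Finset.Ico 1 n,
    (cell n i ×ˢ cell n j).indicator (fun _ => f ((i:ℝ)/n, (j:ℝ)/n)) p

lemma stepF_eval_mem (f : ℝ × ℝ → ℝ) {n : ℕ} {p : ℝ × ℝ}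
    (hi : ⌈(n:ℝ) * p.1⌉₊ ∈ Finset.Ico 1 n) (hj : ⌈(n:ℝ) * p.2⌉₊ ∈ Finset.Ico 1 n) :
    stepF f n p = f ((⌈(n:ℝ) * p.1⌉₊ : ℝ)/n, (⌈(n:ℝ) * p.2⌉₊ : ℝ)/n) := by
  obtain ⟨hi1, hin⟩ := Finset.mem_Ico.1 hi
  obtain ⟨hj1, hjn⟩ := Finset.mem_Ico.1 hj
  have hn : 0 < n := lt_of_le_of_lt (Nat.zero_le _) hin
  set i₀ := ⌈(n:ℝ) * p.1⌉₊
  set j₀ := ⌈(n:ℝ) * p.2⌉₊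
  have hu : p.1 ∈ cell n i₀ := (mem_cell_iff hn hi1).2 rfl
  have hv : p.2 ∈ cell n j₀ := (mem_cell_iff hn hj1).2 rfl
  rw [stepF]
  rw [Finset.sum_eq_single_of_mem i₀ hi]
  · rw [Finset.sum_eq_single_of_mem j₀ hj]
    · rw [Set.indicator_of_mem (Set.mk_mem_prod hu hv)]
    · intro j hjmem hne
      refine Set.indicator_of_notMem (fun hmem => hne ?_) _
      have := (mem_cell_iff hn (Finset.mem_Ico.1 hjmem).1).1 hmem.2
      exact this.symm
  · intro i himem hne
    refine Finset.sum_eq_zero fun j _ => ?_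
    refine Set.indicator_of_notMem (fun hmem => hne ?_) _
    exact ((mem_cell_iff hn (Finset.mem_Ico.1 himem).1).1 hmem.1).symm

lemma stepF_eval_zero (f : ℝ × ℝ → ℝ) {n : ℕ} {p : ℝ × ℝ}
    (h : ¬(⌈(n:ℝ) * p.1⌉₊ ∈ Finset.Ico 1 n ∧ ⌈(n:ℝ) * p.2⌉₊ ∈ Finset.Ico 1 n)) :
    stepF f n p = 0 := by
  rw [stepF]
  refine Finset.sum_eq_zero fun i himem => Finset.sum_eq_zero fun j hjmem => ?_
  refine Set.indicator_of_notMem (fun hmem => h ?_) _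
  have hn : 0 < n := lt_of_le_of_lt (Nat.zero_le _) (Finset.mem_Ico.1 himem).2
  have h1 := (mem_cell_iff hn (Finset.mem_Ico.1 himem).1).1 hmem.1
  have h2 := (mem_cell_iff hn (Finset.mem_Ico.1 hjmem).1).1 hmem.2
  exact ⟨h1 ▸ himem, h2 ▸ hjmem⟩

lemma stepF_measurable (f : ℝ × ℝ → ℝ) (n : ℕ) : Measurable (stepF f n) := by
  unfold stepF
  refine Finset.measurable_sum _ fun i _ => Finset.measurable_sum _ fun j _ => ?_
  exact measurable_const.indicator (measurableSet_Ioc.prod measurableSet_Ioc)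

lemma cell_subset {n i : ℕ} (hi : i ∈ Finset.Ico 1 n) : cell n i ⊆ Set.Ioc 0 1 := by
  obtain ⟨h1, h2⟩ := Finset.mem_Ico.1 hi
  have hn : (0:ℝ) < n := Nat.cast_pos.2 (lt_of_le_of_lt (Nat.zero_le _) h2)
  apply Set.Ioc_subset_Ioc
  · have : (1:ℝ) ≤ i := by exact_mod_cast h1
    apply div_nonneg (by linarith) hn.le
  · rw [div_le_one hn]
    exact_mod_cast h2.le

lemma volume_cell {n i : ℕ} (hn : 0 < n) :
    volume (cell n i) = ENNReal.ofReal (1 / n) := by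
  have hn' : (0:ℝ) < n := Nat.cast_pos.2 hn
  rw [cell, Real.volume_Ioc]
  congr 1
  field_simp
  ring

lemma integral_stepF (f : ℝ × ℝ → ℝ) (n : ℕ) :
    ∫ p, stepF f n p ∂(volume.restrict (Set.Ioc (0:ℝ) 1 ×ˢ Set.Ioc (0:ℝ) 1)) =
      ∑ i ∈ Finset.Ico 1 n, ∑ j ∈ Finset.Ico 1 n,
        (1/(n:ℝ)) * (1/(n:ℝ)) * f ((i:ℝ)/n, (j:ℝ)/n) := by
  rcases Nat.eq_zero_or_pos n with rfl | hn
  · simp [stepF]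
  set μ := volume.restrict (Set.Ioc (0:ℝ) 1 ×ˢ Set.Ioc (0:ℝ) 1) with hμ
  have hmeas : ∀ i j : ℕ, MeasurableSet (cell n i ×ˢ cell n j) :=
    fun i j => measurableSet_Ioc.prod measurableSet_Ioc
  have hμval : ∀ i ∈ Finset.Ico 1 n, ∀ j ∈ Finset.Ico 1 n,
      μ (cell n i ×ˢ cell n j) = ENNReal.ofReal (1/n) * ENNReal.ofReal (1/n) := by
    intro i hi j hj
    rw [hμ, Measure.restrict_apply (hmeas i j),
      Set.inter_eq_self_of_subset_left (Set.prod_mono (cell_subset hi) (cell_subset hj)),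
      Measure.volume_eq_prod, Measure.prod_prod, volume_cell hn, volume_cell hn]
  have hint : ∀ i ∈ Finset.Ico 1 n, ∀ j ∈ Finset.Ico 1 n,
      Integrable ((cell n i ×ˢ cell n j).indicator
        (fun _ => f ((i:ℝ)/n, (j:ℝ)/n))) μ := by
    intro i hi j hj
    rw [integrable_indicator_iff (hmeas i j)]
    refine integrableOn_const ?_
    rw [hμval i hi j hj]
    finiteness
  simp only [stepF]
  rw [integral_finset_sum _ (fun i hi => integrable_finset_sum _ (fun j hj => hint i hi j hj))]
  refine Finset.sum_congr rfl fun i hi => ?_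
  rw [integral_finset_sum _ (fun j hj => hint i hi j hj)]
  refine Finset.sum_congr rfl fun j hj => ?_
  rw [integral_indicator_const _ (hmeas i j), measureReal_def, hμval i hi j hj,
    ← ENNReal.ofReal_mul (by positivity), ENNReal.toReal_ofReal (by positivity), smul_eq_mul]

lemma ceil_mem_Ico {u : ℝ} (hu0 : 0 < u) (hu1 : u < 1) :
    ∀ᶠ n : ℕ in atTop, ⌈(n:ℝ) * u⌉₊ ∈ Finset.Ico 1 n := by
  have hc : Tendsto (fun n : ℕ => (n:ℝ)) atTop atTop := tendsto_natCast_atTop_atTop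
  filter_upwards [hc.eventually_ge_atTop (1/(1-u) + 1), eventually_ge_atTop 1] with n hn hn1
  rw [Finset.mem_Ico]
  have hn' : (0:ℝ) < n := by
    have : (1:ℝ) ≤ n := by exact_mod_cast hn1
    linarith
  constructor
  · rw [Nat.one_le_ceil_iff]
    positivity
  · have h1u : (0:ℝ) < 1 - u := by linarith
    have hdiv : 1/(1-u) ≤ (n:ℝ) - 1 := by linarith
    have h2 : 1 ≤ ((n:ℝ) - 1) * (1 - u) := (div_le_iff₀ h1u).1 hdiv
    have h3 : (n:ℝ) * u ≤ (n:ℝ) - 1 := by nlinarith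
    have hceil : ⌈(n:ℝ) * u⌉₊ ≤ n - 1 := by
      rw [Nat.ceil_le]
      rw [Nat.cast_sub hn1]
      simpa using h3
    omega

lemma ceil_div_tendsto {u : ℝ} (hu0 : 0 ≤ u) :
    Tendsto (fun n : ℕ => (⌈(n:ℝ) * u⌉₊ : ℝ) / n) atTop (𝓝 u) := by
  have hup : Tendsto (fun n : ℕ => u + 1/n) atTop (𝓝 u) := by
    have : Tendsto (fun n : ℕ => u + 1/n) atTop (𝓝 (u + 0)) :=
      tendsto_const_nhds.add tendsto_one_div_atTop_nhds_zero_nat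
    simpa using this
  refine tendsto_of_tendsto_of_tendsto_of_le_of_le'
    (tendsto_const_nhds : Tendsto (fun _ : ℕ => u) atTop (𝓝 u)) hup ?_ ?_
  · filter_upwards [eventually_ge_atTop 1] with n hn1
    have hn' : (0:ℝ) < n := by
      have : (1:ℝ) ≤ n := by exact_mod_cast hn1
      linarith
    rw [le_div_iff₀ hn']
    calc u * n = (n:ℝ) * u := by ring
      _ ≤ ⌈(n:ℝ) * u⌉₊ := Nat.le_ceil _
  · filter_upwards [eventually_ge_atTop 1] with n hn1
    have hn' : (0:ℝ) < n := by
      have : (1:ℝ) ≤ n := by exact_mod_cast hn1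
      linarith
    rw [div_le_iff₀ hn']
    have h1 : (⌈(n:ℝ) * u⌉₊ : ℝ) < (n:ℝ) * u + 1 := Nat.ceil_lt_add_one (by positivity)
    have he : (u + 1/(n:ℝ)) * (n:ℝ) = (n:ℝ) * u + 1 := by field_simp
    linarith

end S14

open S14 in
theorem statement14 (H : ℝ) (hH : 0 < H) (hH' : H < 1) (m : ℕ) (hm : 1 ≤ m) :
    IntegrableOn
      (fun p : ℝ × ℝ =>
        RH H p.1 p.2 ^ (2 * m) * (p.1 * p.2) ^ (-(H * (2 * (m : ℝ) + 1))))
      (Set.Ioc 0 1 ×ˢ Set.Ioc 0 1) ∧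
    Tendsto (fun n : ℕ =>
        ((n : ℝ) ^ 2)⁻¹ *
          ∑ i ∈ Finset.Ico 1 n, ∑ j ∈ Finset.Ico 1 n,
            RH H ((i : ℝ) / n) ((j : ℝ) / n) ^ (2 * m) *
              ((i : ℝ) / n) ^ (-(H * (2 * (m : ℝ) + 1))) *
              ((j : ℝ) / n) ^ (-(H * (2 * (m : ℝ) + 1))))
      atTop
      (𝓝 (∫ p in Set.Ioc (0 : ℝ) 1 ×ˢ Set.Ioc (0 : ℝ) 1,
        RH H p.1 p.2 ^ (2 * m) * (p.1 * p.2) ^ (-(H * (2 * (m : ℝ) + 1))))) := by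
  have hboxmeas : MeasurableSet (Set.Ioc (0:ℝ) 1 ×ˢ Set.Ioc (0:ℝ) 1) :=
    measurableSet_Ioc.prod measurableSet_Ioc
  set μ := volume.restrict (Set.Ioc (0:ℝ) 1 ×ˢ Set.Ioc (0:ℝ) 1) with hμdef
  have hb := bound_integrable hH hH'
  have haef : ∀ᵐ p ∂μ, ‖fI H m p‖ ≤ p.1 ^ (-H) * p.2 ^ (-H) := by
    rw [hμdef, ae_restrict_iff' hboxmeas]
    refine ae_of_all _ fun p hp => ?_
    rw [Real.norm_eq_abs]
    exact f_abs_le hH hH'.le m hp.1.1 hp.2.1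
  have hInt : Integrable (fI H m) μ :=
    hb.mono' (fI_measurable H m).aestronglyMeasurable haef
  constructor
  · exact hInt
  -- convergence
  have hbound : ∀ n : ℕ, ∀ᵐ p ∂μ, ‖stepF (fI H m) n p‖ ≤ p.1 ^ (-H) * p.2 ^ (-H) := by
    intro n
    rw [hμdef, ae_restrict_iff' hboxmeas]
    refine ae_of_all _ fun p hp => ?_
    have hp1 : 0 < p.1 := hp.1.1
    have hp2 : 0 < p.2 := hp.2.1
    by_cases hc : ⌈(n:ℝ) * p.1⌉₊ ∈ Finset.Ico 1 n ∧ ⌈(n:ℝ) * p.2⌉₊ ∈ Finset.Ico 1 n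
    · rw [stepF_eval_mem _ hc.1 hc.2, Real.norm_eq_abs]
      obtain ⟨hi, hj⟩ := hc
      obtain ⟨hi1, hin⟩ := Finset.mem_Ico.1 hi
      obtain ⟨hj1, hjn⟩ := Finset.mem_Ico.1 hj
      have hn : (0:ℝ) < n := Nat.cast_pos.2 (lt_of_le_of_lt (Nat.zero_le _) hin)
      have hxpos : (0:ℝ) < (⌈(n:ℝ) * p.1⌉₊ : ℝ) / n := by
        apply div_pos _ hn
        exact_mod_cast hi1
      have hypos : (0:ℝ) < (⌈(n:ℝ) * p.2⌉₊ : ℝ) / n := by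
        apply div_pos _ hn
        exact_mod_cast hj1
      have hle1 : p.1 ≤ (⌈(n:ℝ) * p.1⌉₊ : ℝ) / n := by
        rw [le_div_iff₀ hn]
        calc p.1 * n = (n:ℝ) * p.1 := by ring
          _ ≤ ⌈(n:ℝ) * p.1⌉₊ := Nat.le_ceil _
      have hle2 : p.2 ≤ (⌈(n:ℝ) * p.2⌉₊ : ℝ) / n := by
        rw [le_div_iff₀ hn]
        calc p.2 * n = (n:ℝ) * p.2 := by ring
          _ ≤ ⌈(n:ℝ) * p.2⌉₊ := Nat.le_ceil _
      calc |fI H m ((⌈(n:ℝ) * p.1⌉₊ : ℝ)/n, (⌈(n:ℝ) * p.2⌉₊ : ℝ)/n)|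
          ≤ ((⌈(n:ℝ) * p.1⌉₊ : ℝ)/n) ^ (-H) * ((⌈(n:ℝ) * p.2⌉₊ : ℝ)/n) ^ (-H) :=
            f_abs_le hH hH'.le m hxpos hypos
        _ ≤ p.1 ^ (-H) * p.2 ^ (-H) := by
            apply mul_le_mul (rpow_neg_le hp1 hle1 hH.le) (rpow_neg_le hp2 hle2 hH.le)
            · exact Real.rpow_nonneg hypos.le _
            · exact Real.rpow_nonneg hp1.le _
    · rw [stepF_eval_zero _ hc]
      simp only [norm_zero]
      positivity
  have hnull : μ {p : ℝ × ℝ | p.1 = 1 ∨ p.2 = 1} = 0 := by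
    have hsub : {p : ℝ × ℝ | p.1 = 1 ∨ p.2 = 1} ⊆
        ({1} ×ˢ (Set.univ : Set ℝ)) ∪ ((Set.univ : Set ℝ) ×ˢ {1}) := by
      rintro p (h | h)
      · exact Or.inl ⟨h, trivial⟩
      · exact Or.inr ⟨trivial, h⟩
    have hU : MeasurableSet (({1} ×ˢ (Set.univ : Set ℝ)) ∪ ((Set.univ : Set ℝ) ×ˢ {1})) :=
      ((measurableSet_singleton 1).prod MeasurableSet.univ).union
        (MeasurableSet.univ.prod (measurableSet_singleton 1))
    have hvol : volume (({1} ×ˢ (Set.univ : Set ℝ)) ∪ ((Set.univ : Set ℝ) ×ˢ {1})) = 0 := by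
      apply measure_union_null
      · rw [Measure.volume_eq_prod, Measure.prod_prod]
        simp
      · rw [Measure.volume_eq_prod, Measure.prod_prod]
        simp
    refine measure_mono_null hsub ?_
    rw [hμdef, Measure.restrict_apply hU]
    exact measure_mono_null Set.inter_subset_left hvol
  have hlim : ∀ᵐ p ∂μ, Tendsto (fun n : ℕ => stepF (fI H m) n p) atTop (𝓝 (fI H m p)) := by
    have h1 : ∀ᵐ p ∂μ, p ∈ Set.Ioc (0:ℝ) 1 ×ˢ Set.Ioc (0:ℝ) 1 := ae_restrict_mem hboxmeas
    have h2 : ∀ᵐ p ∂μ, p ∉ {p : ℝ × ℝ | p.1 = 1 ∨ p.2 = 1} :=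
      measure_eq_zero_iff_ae_notMem.mp hnull
    filter_upwards [h1, h2] with p hp hnot

    push_neg at hnot
    have hp1 : 0 < p.1 := hp.1.1
    have hp2 : 0 < p.2 := hp.2.1
    have hu1 : p.1 < 1 := lt_of_le_of_ne hp.1.2 hnot.1
    have hv1 : p.2 < 1 := lt_of_le_of_ne hp.2.2 hnot.2
    have hev : ∀ᶠ n : ℕ in atTop, stepF (fI H m) n p =
        fI H m ((⌈(n:ℝ) * p.1⌉₊ : ℝ)/n, (⌈(n:ℝ) * p.2⌉₊ : ℝ)/n) := by
      filter_upwards [ceil_mem_Ico hp1 hu1, ceil_mem_Ico hp2 hv1] with n hi hj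
      exact stepF_eval_mem _ hi hj
    have hcont : ContinuousAt (fI H m) p := f_contAt hH m hp1 hp2
    have htend : Tendsto (fun n : ℕ =>
        (((⌈(n:ℝ) * p.1⌉₊ : ℝ)/n, (⌈(n:ℝ) * p.2⌉₊ : ℝ)/n) : ℝ × ℝ)) atTop (𝓝 p) := by
      have := (ceil_div_tendsto hp1.le).prodMk_nhds (ceil_div_tendsto hp2.le)
      simpa using this
    exact (hcont.tendsto.comp htend).congr'
      (by filter_upwards [hev] with n h using h.symm)
  have hmeasF : ∀ n : ℕ, AEStronglyMeasurable (stepF (fI H m) n) μ :=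
    fun n => (stepF_measurable _ n).aestronglyMeasurable
  have key := tendsto_integral_of_dominated_convergence _ hmeasF hb hbound hlim
  have heq : ∀ n : ℕ, ∫ p, stepF (fI H m) n p ∂μ =
      ((n : ℝ) ^ 2)⁻¹ *
        ∑ i ∈ Finset.Ico 1 n, ∑ j ∈ Finset.Ico 1 n,
          RH H ((i : ℝ) / n) ((j : ℝ) / n) ^ (2 * m) *
            ((i : ℝ) / n) ^ (-(H * (2 * (m : ℝ) + 1))) *
            ((j : ℝ) / n) ^ (-(H * (2 * (m : ℝ) + 1))) := by
    intro n
    rw [hμdef, integral_stepF, Finset.mul_sum]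
    refine Finset.sum_congr rfl fun i hi => ?_
    rw [Finset.mul_sum]
    refine Finset.sum_congr rfl fun j hj => ?_
    have hn : (0:ℝ) < n :=
      Nat.cast_pos.2 (lt_of_le_of_lt (Nat.zero_le _) (Finset.mem_Ico.1 hi).2)
    have h1 : (0:ℝ) ≤ (i:ℝ)/n := by positivity
    have h2 : (0:ℝ) ≤ (j:ℝ)/n := by positivity
    rw [fI, Real.mul_rpow h1 h2]
    ring
  have hfe : (fun n : ℕ =>
      ((n : ℝ) ^ 2)⁻¹ * ∑ i ∈ Finset.Ico 1 n, ∑ j ∈ Finset.Ico 1 n,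
        RH H ((i : ℝ) / n) ((j : ℝ) / n) ^ (2 * m) *
          ((i : ℝ) / n) ^ (-(H * (2 * (m : ℝ) + 1))) *
          ((j : ℝ) / n) ^ (-(H * (2 * (m : ℝ) + 1))))
      = fun n : ℕ => ∫ p, stepF (fI H m) n p ∂μ := funext fun n => (heq n).symm
  rw [hfe]
  exact key
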